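/- Let G be a Hausdorff topological group and let Γ be a connected simple G-graph with discrete action and compact pointwise edge stabilizers. Let u be a vertex of Γ and let H ≤ G be a compact open subgroup. Let Δ be the simple graph with vertex set V(Γ) ⊔ G/H (the disjoint union with the set of left cosets of H) and edge set E(Γ) ∪ { {g·u, gH} : g ∈ G }, with G acting on V(Γ) as before and on G/H by left translation. Then for every vertex a of Γ, Γ is fine at a if and only if Δ is fine at a; moreover, there is a constant ℓ ≥ 1 such that d_Δ(x,y) ≤ d_Γ(x,y) ≤ ℓ·d_Δ(x,y) for all vertices x, y of Γ, and every vertex of Δ is at distance at most 1 from a vertex of Γ. -/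

import Mathlib

open MulAction

universe u v

/-- A topological group is compactly generated if it has a compact subset that
generates it algebraically. -/
def IsCompactlyGeneratedGroup (G : Type*) [Group G] [TopologicalSpace G] : Prop :=
  ∃ S : Set G, IsCompact S ∧ Subgroup.closure S = ⊤

/-- A topological group `G` is compactly presented if there are a compact generating set `S`
and `n : ℕ` such that the kernel of the canonical map `FreeGroup S →* G` is generated as a
normal subgroup by its elements of word length at most `n`. -/
def IsCompactlyPresentedGroup (G : Type*) [Group G] [TopologicalSpace G] : Prop :=
  ∃ (S : Set G) (n : ℕ), IsCompact S ∧ Subgroup.closure S = ⊤ ∧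
    Subgroup.normalClosure
      {x : FreeGroup S |
        x ∈ (FreeGroup.lift (fun s : S => (s : G))).ker ∧
          ∃ l : List (S × Bool), FreeGroup.mk l = x ∧ l.length ≤ n} =
      (FreeGroup.lift (fun s : S => (s : G))).ker

/-- A topological group is coherent if every closed compactly generated subgroup
(with the subspace topology) is compactly presented. -/
def IsCoherentGroup (G : Type*) [Group G] [TopologicalSpace G] : Prop :=
  ∀ Q : Subgroup G, IsClosed (Q : Set G) → IsCompactlyGeneratedGroup Q →
    IsCompactlyPresentedGroup Q

section Amalgam

variable {G : Type u} [Group G]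

/-- The two-element family of groups `A`, `B`. -/
def amalgamFamily (A B : Subgroup G) : Bool → Type u := fun b => match b with
  | true => A
  | false => B

instance (A B : Subgroup G) : (b : Bool) → Group (amalgamFamily A B b)
  | true => inferInstanceAs (Group A)
  | false => inferInstanceAs (Group B)

/-- The inclusions of `C = A ⊓ B` into `A` and `B`. -/
def amalgamMaps (A B : Subgroup G) : (b : Bool) → (↥(A ⊓ B) →* amalgamFamily A B b)
  | true => Subgroup.inclusion inf_le_left
  | false => Subgroup.inclusion inf_le_right

/-- The inclusions of `A` and `B` into `G`. -/
def amalgamProj (A B : Subgroup G) : (b : Bool) → (amalgamFamily A B b →* G)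
  | true => A.subtype
  | false => B.subtype

/-- The canonical homomorphism from the pushout (in the category of groups) of the
inclusions `A ⊓ B ↪ A` and `A ⊓ B ↪ B` to `G`. -/
def amalgamCanonicalHom (A B : Subgroup G) : Monoid.PushoutI (amalgamMaps A B) →* G :=
  Monoid.PushoutI.lift (amalgamProj A B) (A ⊓ B).subtype
    (by rintro (_ | _) <;> exact MonoidHom.ext fun x => rfl)

/-- `G` splits as the amalgamated free product `A ∗_(A ⊓ B) B` if the canonical homomorphism
from the pushout of the inclusions to `G` is bijective. -/
def IsAmalgamatedProduct (A B : Subgroup G) : Prop :=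
  Function.Bijective (amalgamCanonicalHom A B)

end Amalgam

section Graphs

variable {V : Type v}

/-- The graph obtained from `Γ` by deleting the vertex `v` (making it isolated). -/
def SimpleGraph.deleteVertex (Γ : SimpleGraph V) (v : V) : SimpleGraph V where
  Adj a b := Γ.Adj a b ∧ a ≠ v ∧ b ≠ v
  symm := ⟨fun a b h => ⟨h.1.symm, h.2.2, h.2.1⟩⟩
  loopless := ⟨fun a h => Γ.irrefl h.1⟩

/-- `Γ` is fine at `v` if for every neighbour `x` of `v` and every `n`, there are only
finitely many neighbours of `v` joined to `x` by a path of length at most `n` avoiding `v`;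
i.e. balls of the angle metric on the neighbours of `v` are finite. -/
def SimpleGraph.FineAt (Γ : SimpleGraph V) (v : V) : Prop :=
  ∀ x ∈ Γ.neighborSet v, ∀ n : ℕ,
    {y | y ∈ Γ.neighborSet v ∧ ∃ p : (Γ.deleteVertex v).Walk x y, p.length ≤ n}.Finite

/-- A graph is fine if it is fine at every vertex. -/
def SimpleGraph.Fine (Γ : SimpleGraph V) : Prop := ∀ v : V, Γ.FineAt v

/-- A connected graph is hyperbolic if its path metric satisfies the four point condition
up to an additive constant. -/
def SimpleGraph.IsHyperbolic (Γ : SimpleGraph V) : Prop :=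
  ∃ δ : ℝ, 0 ≤ δ ∧ ∀ x y z w : V,
    (Γ.dist x y + Γ.dist z w : ℝ) ≤
      max ((Γ.dist x z + Γ.dist y w : ℝ)) ((Γ.dist x w + Γ.dist y z : ℝ)) + δ

/-- Two graphs (with their path metrics) are quasi-isometric. -/
def QuasiIsometricGraphs {V₁ : Type*} {V₂ : Type*}
    (Γ₁ : SimpleGraph V₁) (Γ₂ : SimpleGraph V₂) : Prop :=
  ∃ (f : V₁ → V₂) (L C : ℝ), 1 ≤ L ∧ 0 ≤ C ∧
    (∀ x y : V₁,
      L⁻¹ * (Γ₁.dist x y : ℝ) - C ≤ (Γ₂.dist (f x) (f y) : ℝ) ∧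
      (Γ₂.dist (f x) (f y) : ℝ) ≤ L * (Γ₁.dist x y : ℝ) + C) ∧
    ∀ z : V₂, ∃ x : V₁, (Γ₂.dist z (f x) : ℝ) ≤ C

end Graphs

section GGraphs

variable (G : Type u) [Group G] [TopologicalSpace G] {V : Type v} [MulAction G V]

/-- The action of `G` on the vertices of `Γ` is by graph automorphisms. -/
def IsGraphAction (Γ : SimpleGraph V) : Prop :=
  ∀ (g : G) (a b : V), Γ.Adj a b → Γ.Adj (g • a) (g • b)

/-- The action is discrete: all vertex stabilizers are open. -/
def IsDiscreteAction (Γ : SimpleGraph V) : Prop :=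
  ∀ v : V, IsOpen ((stabilizer G v : Subgroup G) : Set G)

/-- The action is cocompact: finitely many orbits of vertices and of edges. -/
def IsCocompactAction (Γ : SimpleGraph V) : Prop :=
  (∃ s : Set V, s.Finite ∧ ∀ v : V, ∃ g : G, g • v ∈ s) ∧
  (∃ t : Set (V × V), t.Finite ∧ ∀ a b : V, Γ.Adj a b → ∃ g : G, (g • a, g • b) ∈ t)

/-- Pointwise edge stabilizers are compact. -/
def HasCompactEdgeStabilizers (Γ : SimpleGraph V) : Prop :=
  ∀ a b : V, Γ.Adj a b →
    IsCompact ((stabilizer G a ⊓ stabilizer G b : Subgroup G) : Set G)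

/-- The conjugate `g H g⁻¹` of a subgroup. -/
def conjSubgroup {G : Type u} [Group G] (g : G) (H : Subgroup G) : Subgroup G :=
  Subgroup.map (MulAut.conj g).toMonoidHom H

/-- A proper pair: `G` has a compact open subgroup, `ℋ` is a finite collection of open
subgroups, and no two distinct non-compact members of `ℋ` are conjugate. -/
def IsProperPair (G : Type u) [Group G] [TopologicalSpace G]
    (ℋ : Finset (Subgroup G)) : Prop :=
  (∃ U : Subgroup G, IsCompact (U : Set G) ∧ IsOpen (U : Set G)) ∧
  (∀ H ∈ ℋ, IsOpen ((H : Subgroup G) : Set G)) ∧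
  (∀ H ∈ ℋ, ∀ K ∈ ℋ, ¬ IsCompact ((H : Subgroup G) : Set G) →
    ¬ IsCompact ((K : Subgroup G) : Set G) →
    (∃ g : G, conjSubgroup g H = K) → H = K)

/-- `Γ` is a Cayley-Abels graph of `G` with respect to `ℋ`. -/
def IsCayleyAbelsGraph (ℋ : Finset (Subgroup G)) (Γ : SimpleGraph V) : Prop :=
  IsGraphAction G Γ ∧
  Γ.Connected ∧
  IsDiscreteAction G Γ ∧
  IsCocompactAction G Γ ∧
  HasCompactEdgeStabilizers G Γ ∧
  (∀ v : V, IsCompact ((stabilizer G v : Subgroup G) : Set G) ∨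
    ∃ H ∈ ℋ, ∃ g : G, stabilizer G v = conjSubgroup g H) ∧
  (∀ H ∈ ℋ, ∃ v : V, stabilizer G v = H) ∧
  (∀ H ∈ ℋ, ¬ IsCompact ((H : Subgroup G) : Set G) →
    ∀ u v : V, stabilizer G u = H → stabilizer G v = H → ∃ g : G, g • u = v)

end GGraphs

/-- The graph obtained from `Γ` by attaching a `G`-orbit of cone edges with representative
`{u, H}`: the new vertices are the left cosets `G/H` and `g•u` is joined to `gH`. -/
def attachConeEdges (G : Type u) [Group G] {V : Type v} [MulAction G V]
    (Γ : SimpleGraph V) (u : V) (H : Subgroup G) : SimpleGraph (V ⊕ (G ⧸ H)) where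
  Adj a b :=
    (∃ x y : V, Γ.Adj x y ∧ a = Sum.inl x ∧ b = Sum.inl y) ∨
    (∃ g : G, (a = Sum.inl (g • u) ∧ b = Sum.inr (g : G ⧸ H)) ∨
              (b = Sum.inl (g • u) ∧ a = Sum.inr (g : G ⧸ H)))
  symm := by
    refine ⟨?_⟩
    rintro a b (⟨x, y, hxy, ha, hb⟩ | ⟨g, h⟩)
    · exact Or.inl ⟨y, x, hxy.symm, hb, ha⟩
    · exact Or.inr ⟨g, h.symm⟩
  loopless := by
    refine ⟨?_⟩
    rintro a (⟨x, y, hxy, ha, hb⟩ | ⟨g, (⟨h1, h2⟩ | ⟨h1, h2⟩)⟩)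
    · obtain rfl : x = y := Sum.inl.inj (ha.symm.trans hb)
      exact Γ.irrefl hxy
    · exact Sum.inl_ne_inr (h1.symm.trans h2)
    · exact Sum.inl_ne_inr (h1.symm.trans h2)

set_option linter.unusedSectionVars false

namespace FineAux

open SimpleGraph

variable {G : Type u} [Group G] [TopologicalSpace G] [IsTopologicalGroup G]
variable {V : Type v} [MulAction G V]

lemma finite_image_of_openFibers {X : Type*} {C : Set G} (hC : IsCompact C)
    (φ : G → X) (hφ : ∀ c : G, IsOpen {g : G | φ g = φ c}) : (φ '' C).Finite := by
  obtain ⟨t, ht⟩ := hC.elim_finite_subcover (fun c : C => {g : G | φ g = φ (c : G)})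
    (fun c => hφ c) (fun g hg => Set.mem_iUnion.2 ⟨⟨g, hg⟩, rfl⟩)
  refine Set.Finite.subset (t.finite_toSet.biUnion fun c _ => Set.finite_singleton (φ (c : G))) ?_
  rintro _ ⟨g, hg, rfl⟩
  obtain ⟨c, hc, hgc⟩ := Set.mem_iUnion₂.1 (ht hg)
  exact Set.mem_biUnion hc hgc

lemma finite_smul_image (hdisc : ∀ v : V, IsOpen ((stabilizer G v : Subgroup G) : Set G))
    {C : Set G} (hC : IsCompact C) (v : V) : ((fun g : G => g • v) '' C).Finite := by
  refine finite_image_of_openFibers hC _ fun c => ?_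
  have h : {g : G | g • v = c • v} =
      (fun g : G => c⁻¹ * g) ⁻¹' ((stabilizer G v : Subgroup G) : Set G) := by
    ext g
    simp only [Set.mem_setOf_eq, Set.mem_preimage, SetLike.mem_coe, MulAction.mem_stabilizer_iff,
      mul_smul, inv_smul_eq_iff]
  exact h ▸ (hdisc v).preimage (continuous_const.mul continuous_id)

lemma finite_coset_image {H : Subgroup G} (hHopen : IsOpen (H : Set G))
    {C : Set G} (hC : IsCompact C) : ((fun g : G => (g : G ⧸ H)) '' C).Finite := by
  refine finite_image_of_openFibers hC _ fun c => ?_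
  have h : {g : G | (g : G ⧸ H) = (c : G ⧸ H)} = (fun g : G => c⁻¹ * g) ⁻¹' (H : Set G) := by
    ext g
    simp only [Set.mem_setOf_eq, Set.mem_preimage, SetLike.mem_coe]
    rw [eq_comm, QuotientGroup.eq]
  exact h ▸ hHopen.preimage (continuous_const.mul continuous_id)

def transSet (Γ : SimpleGraph V) (b c w₁ w₂ : V) : Set G :=
  {g : G | g • b = w₁ ∧ g • c = w₂ ∧ Γ.Adj b c}

lemma transSet_compact {Γ : SimpleGraph V} (hedge : HasCompactEdgeStabilizers G Γ)
    (b c w₁ w₂ : V) : IsCompact (transSet (G := G) Γ b c w₁ w₂) := by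
  by_cases hadj : Γ.Adj b c
  · rcases Set.eq_empty_or_nonempty (transSet (G := G) Γ b c w₁ w₂) with h | ⟨g₁, hg₁b, hg₁c, -⟩
    · rw [h]; exact isCompact_empty
    · have heq : transSet (G := G) Γ b c w₁ w₂ =
          (fun x : G => g₁ * x) ''
            ((stabilizer G b ⊓ stabilizer G c : Subgroup G) : Set G) := by
        ext g
        constructor
        · rintro ⟨h1, h2, -⟩
          refine ⟨g₁⁻¹ * g, ?_, by simp⟩
          rw [SetLike.mem_coe, Subgroup.mem_inf]
          constructor <;> rw [MulAction.mem_stabilizer_iff, mul_smul]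
          · rw [h1, ← hg₁b, inv_smul_smul]
          · rw [h2, ← hg₁c, inv_smul_smul]
        · rintro ⟨x, hx, rfl⟩
          rw [SetLike.mem_coe, Subgroup.mem_inf] at hx
          obtain ⟨hxb, hxc⟩ := hx
          rw [MulAction.mem_stabilizer_iff] at hxb hxc
          exact ⟨by rw [mul_smul, hxb, hg₁b], by rw [mul_smul, hxc, hg₁c], hadj⟩
      rw [heq]
      exact (hedge b c hadj).image (continuous_mul_left g₁)
  · have h : transSet (G := G) Γ b c w₁ w₂ = ∅ := by
      ext g; simp [transSet, hadj]
    rw [h]; exact isCompact_empty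

def smulWalk {Γ : SimpleGraph V} (hact : IsGraphAction G Γ) (g : G) :
    ∀ {x y : V}, Γ.Walk x y → Γ.Walk (g • x) (g • y)
  | _, _, SimpleGraph.Walk.nil => SimpleGraph.Walk.nil
  | _, _, SimpleGraph.Walk.cons h p => SimpleGraph.Walk.cons (hact g _ _ h) (smulWalk hact g p)

lemma smulWalk_length {Γ : SimpleGraph V} (hact : IsGraphAction G Γ) (g : G) :
    ∀ {x y : V} (p : Γ.Walk x y), (smulWalk hact g p).length = p.length
  | _, _, SimpleGraph.Walk.nil => rfl
  | _, _, SimpleGraph.Walk.cons h p => by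
      simp only [smulWalk, SimpleGraph.Walk.length_cons, smulWalk_length hact g p]

lemma smulWalk_support {Γ : SimpleGraph V} (hact : IsGraphAction G Γ) (g : G) :
    ∀ {x y : V} (p : Γ.Walk x y),
      (smulWalk hact g p).support = p.support.map (fun x => g • x)
  | _, _, SimpleGraph.Walk.nil => by simp [smulWalk]
  | _, _, SimpleGraph.Walk.cons h p => by
      simp [smulWalk, SimpleGraph.Walk.support_cons, smulWalk_support hact g p]

def toDelete {Γ : SimpleGraph V} {a : V} :
    ∀ {x y : V} (p : Γ.Walk x y), a ∉ p.support → (Γ.deleteVertex a).Walk x y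
  | _, _, SimpleGraph.Walk.nil, _ => SimpleGraph.Walk.nil
  | _, _, SimpleGraph.Walk.cons h p, hs =>
      SimpleGraph.Walk.cons
        ⟨h,
         fun hx => hs (by rw [SimpleGraph.Walk.support_cons, ← hx]; exact List.mem_cons_self),
         fun hz => hs (by
           rw [SimpleGraph.Walk.support_cons]
           exact List.mem_cons_of_mem _ (hz ▸ p.start_mem_support))⟩
        (toDelete p (fun hm => hs (by
          rw [SimpleGraph.Walk.support_cons]; exact List.mem_cons_of_mem _ hm)))

lemma toDelete_length {Γ : SimpleGraph V} {a : V} :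
    ∀ {x y : V} (p : Γ.Walk x y) (h : a ∉ p.support), (toDelete p h).length = p.length
  | _, _, SimpleGraph.Walk.nil, _ => rfl
  | _, _, SimpleGraph.Walk.cons hadj p, hs => by
      simp only [toDelete, SimpleGraph.Walk.length_cons, toDelete_length p]
      exact congrArg (· + 1) (toDelete_length p _)

inductive Chain (Γ' : SimpleGraph V) (J : V → V → Prop) (s : V) : ℕ → V → Prop
  | refl (m : ℕ) : Chain Γ' J s m s
  | seg {m : ℕ} {p q : V} : Chain Γ' J s m p → Γ'.Adj p q → Chain Γ' J s (m + 1) q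
  | jump {m : ℕ} {p q : V} : Chain Γ' J s m p → J p q → Chain Γ' J s (m + 1) q

lemma chain_succ {Γ' : SimpleGraph V} {J : V → V → Prop} {s : V} :
    ∀ {m : ℕ} {q : V}, Chain Γ' J s m q → Chain Γ' J s (m + 1) q := by
  intro m q ch
  induction ch with
  | refl m => exact Chain.refl (m + 1)
  | seg _ adj ih => exact Chain.seg ih adj
  | jump _ hJ ih => exact Chain.jump ih hJ

lemma chain_mono {Γ' : SimpleGraph V} {J : V → V → Prop} {s : V} {m m' : ℕ} {q : V}
    (h : m ≤ m') (ch : Chain Γ' J s m q) : Chain Γ' J s m' q := by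
  induction h with
  | refl => exact ch
  | step _ ih => exact chain_succ ih

lemma chain_cons {Γ' : SimpleGraph V} {J : V → V → Prop} {s p : V}
    (h : Γ'.Adj s p ∨ J s p) :
    ∀ {m : ℕ} {q : V}, Chain Γ' J p m q → Chain Γ' J s (m + 1) q := by
  intro m q ch
  induction ch with
  | refl m =>
    rcases h with h | h
    · exact Chain.seg (Chain.refl m) h
    · exact Chain.jump (Chain.refl m) h
  | seg _ adj ih => exact Chain.seg ih adj
  | jump _ hJ ih => exact Chain.jump ih hJ

lemma chain_prepend_walk {Γ' : SimpleGraph V} {J : V → V → Prop} :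
    ∀ {s p : V} (ω : Γ'.Walk s p) {m : ℕ} {q : V},
      Chain Γ' J p m q → Chain Γ' J s (m + ω.length) q
  | _, _, SimpleGraph.Walk.nil, m, q, ch => by simpa using ch
  | _, _, SimpleGraph.Walk.cons h t, m, q, ch => by
      have h2 := chain_prepend_walk t ch
      have h3 := chain_cons (Or.inl h) h2
      rw [SimpleGraph.Walk.length_cons,
        show m + (t.length + 1) = m + t.length + 1 from by omega]
      exact h3

lemma chain_append_walk {Γ' : SimpleGraph V} {J : V → V → Prop} {s : V} :
    ∀ {p q : V} (ω : Γ'.Walk p q) {m : ℕ},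
      Chain Γ' J s m p → Chain Γ' J s (m + ω.length) q
  | _, _, SimpleGraph.Walk.nil, m, ch => by simpa using ch
  | _, _, SimpleGraph.Walk.cons h t, m, ch => by
      rw [SimpleGraph.Walk.length_cons,
        show m + (t.length + 1) = (m + 1) + t.length from by omega]
      exact chain_append_walk t (Chain.seg ch h)

lemma chain_decomp {Γ' : SimpleGraph V} {J : V → V → Prop} {s : V} :
    ∀ {m : ℕ} {q : V}, Chain Γ' J s m q →
      (∃ ω : Γ'.Walk s q, ω.length ≤ m) ∨
      ∃ k w w', k < m ∧ Chain Γ' J s k w ∧ J w w' ∧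
        ∃ ω : Γ'.Walk w' q, k + 1 + ω.length ≤ m := by
  intro m q ch
  induction ch with
  | refl m => exact Or.inl ⟨SimpleGraph.Walk.nil, Nat.zero_le _⟩
  | seg _ adj ih =>
    rcases ih with ⟨ω, hω⟩ | ⟨k, w, w', hk, chk, hJ, ω, hlen⟩
    · exact Or.inl ⟨ω.concat adj, by rw [SimpleGraph.Walk.length_concat]; omega⟩
    · exact Or.inr ⟨k, w, w', by omega, chk, hJ, ω.concat adj,
        by rw [SimpleGraph.Walk.length_concat]; omega⟩
  | jump ch hJ ih =>
    exact Or.inr ⟨_, _, _, Nat.lt_succ_self _, ch, hJ, SimpleGraph.Walk.nil, by simp⟩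

lemma splitHead [DecidableEq V] {Γ : SimpleGraph V} {a : V} :
    ∀ {x : V} (R : Γ.Walk a x), x ≠ a → R.support.count a = 1 →
      ∃ (w : V) (ω : Γ.Walk w x), Γ.Adj a w ∧ a ∉ ω.support ∧ w ∈ R.support ∧
        ω.length + 1 = R.length := by
  intro x R hx hcount
  cases R with
  | nil => exact absurd rfl hx
  | cons h t =>
    rename_i w
    refine ⟨w, t, h, ?_, ?_, by rw [SimpleGraph.Walk.length_cons]⟩
    · rw [SimpleGraph.Walk.support_cons, List.count_cons_self] at hcount
      exact List.count_eq_zero.mp (by omega)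
    · rw [SimpleGraph.Walk.support_cons]
      exact List.mem_cons_of_mem _ t.start_mem_support

lemma splitLast [DecidableEq V] {Γ : SimpleGraph V} {a x : V} (R : Γ.Walk x a) (hx : x ≠ a)
    (hcount : R.support.count a = 1) :
    ∃ (w : V) (ω : Γ.Walk x w), Γ.Adj w a ∧ a ∉ ω.support ∧ w ∈ R.support ∧
      ω.length + 1 = R.length := by
  obtain ⟨w, ω, hadj, hns, hmem, hlen⟩ := splitHead R.reverse hx (by
    rw [SimpleGraph.Walk.support_reverse, List.count_reverse]; exact hcount)
  refine ⟨w, ω.reverse, hadj.symm,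
    by rw [SimpleGraph.Walk.support_reverse, List.mem_reverse]; exact hns, ?_, ?_⟩
  · rw [SimpleGraph.Walk.support_reverse, List.mem_reverse] at hmem; exact hmem
  · rw [SimpleGraph.Walk.length_reverse]
    rw [SimpleGraph.Walk.length_reverse] at hlen
    exact hlen

section Attach

variable {Γ : SimpleGraph V} {u : V} {H : Subgroup G}

lemma adj_inl_inl {x y : V}
    (h : (attachConeEdges G Γ u H).Adj (Sum.inl x) (Sum.inl y)) : Γ.Adj x y := by
  rcases h with ⟨x', y', hxy, hx, hy⟩ | ⟨g, ⟨h1, h2⟩ | ⟨h1, h2⟩⟩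
  · rw [Sum.inl.injEq] at hx hy; rwa [hx, hy]
  · exact absurd h2 (by simp)
  · exact absurd h2 (by simp)

lemma adj_inl_inr {x : V} {c : G ⧸ H}
    (h : (attachConeEdges G Γ u H).Adj (Sum.inl x) (Sum.inr c)) :
    ∃ g : G, x = g • u ∧ c = (g : G ⧸ H) := by
  rcases h with ⟨x', y', hxy, hx, hy⟩ | ⟨g, ⟨h1, h2⟩ | ⟨h1, h2⟩⟩
  · exact absurd hy (by simp)
  · exact ⟨g, Sum.inl.inj h1, Sum.inr.inj h2⟩
  · exact absurd h2 (by simp)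

lemma adj_inr_inl {p : V} {c : G ⧸ H}
    (h : (attachConeEdges G Γ u H).Adj (Sum.inr c) (Sum.inl p)) :
    ∃ g : G, p = g • u ∧ c = (g : G ⧸ H) := by
  rcases h with ⟨x', y', hxy, hx, hy⟩ | ⟨g, ⟨h1, h2⟩ | ⟨h1, h2⟩⟩
  · exact absurd hx (by simp)
  · exact absurd h1 (by simp)
  · exact ⟨g, Sum.inl.inj h1, Sum.inr.inj h2⟩

lemma not_adj_inr_inr {c c' : G ⧸ H} :
    ¬ (attachConeEdges G Γ u H).Adj (Sum.inr c) (Sum.inr c') := by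
  rintro (⟨x, y, hxy, hx, hy⟩ | ⟨g, ⟨h1, h2⟩ | ⟨h1, h2⟩⟩) <;> simp_all

end Attach

def JumpRel (Γ : SimpleGraph V) [MulAction G V] (P : ∀ x y : V, Γ.Walk x y) (F : Set V)
    (a w₁ w₂ : V) : Prop :=
  ∃ f₁ ∈ F, ∃ f₂ ∈ F, ∃ b c d e : V,
    b ∈ (P f₁ f₂).support ∧ c ∈ (P f₁ f₂).support ∧ e ∈ (P f₁ f₂).support ∧
    ∃ g : G, (g • b = w₁ ∧ g • c = a ∧ Γ.Adj b c) ∧ (g • d = a ∧ g • e = w₂ ∧ Γ.Adj d e)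

lemma jumpRel_adj_left {Γ : SimpleGraph V} (hact : IsGraphAction G Γ)
    {P : ∀ x y : V, Γ.Walk x y} {F : Set V} {a w₁ w₂ : V}
    (hJ : JumpRel (G := G) Γ P F a w₁ w₂) : Γ.Adj a w₁ := by
  obtain ⟨f₁, -, f₂, -, b, c, d, e, -, -, -, g, ⟨hb, hc, hbc⟩, -⟩ := hJ
  have h5 := hact g _ _ hbc
  rw [hb, hc] at h5
  exact h5.symm

lemma jumpRel_adj_right {Γ : SimpleGraph V} (hact : IsGraphAction G Γ)
    {P : ∀ x y : V, Γ.Walk x y} {F : Set V} {a w₁ w₂ : V}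
    (hJ : JumpRel (G := G) Γ P F a w₁ w₂) : Γ.Adj a w₂ := by
  obtain ⟨f₁, -, f₂, -, b, c, d, e, -, -, -, g, -, ⟨hd, he, hde⟩⟩ := hJ
  have h5 := hact g _ _ hde
  rwa [hd, he] at h5

lemma jumpFin {Γ : SimpleGraph V}
    (hdisc : ∀ v : V, IsOpen ((stabilizer G v : Subgroup G) : Set G))
    (hedge : HasCompactEdgeStabilizers G Γ)
    (P : ∀ x y : V, Γ.Walk x y) {F : Set V} (hF : F.Finite) (a w₁ : V) :
    {w₂ | JumpRel (G := G) Γ P F a w₁ w₂}.Finite := by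
  refine Set.Finite.subset
    (Set.Finite.biUnion hF fun f₁ _ => Set.Finite.biUnion hF fun f₂ _ =>
      Set.Finite.biUnion (List.finite_toSet (P f₁ f₂).support) fun b _ =>
      Set.Finite.biUnion (List.finite_toSet (P f₁ f₂).support) fun c _ =>
      Set.Finite.biUnion (List.finite_toSet (P f₁ f₂).support) fun e _ =>
        finite_smul_image hdisc (transSet_compact hedge b c w₁ a) e) ?_
  rintro w₂ ⟨f₁, hf₁, f₂, hf₂, b, c, d, e, hb, hc, he, g, ⟨h1, h2, h3⟩, ⟨h4, h5, h6⟩⟩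
  exact Set.mem_biUnion hf₁ (Set.mem_biUnion hf₂ (Set.mem_biUnion hb (Set.mem_biUnion hc
    (Set.mem_biUnion he ⟨g, ⟨h1, h2, h3⟩, h5⟩))))

lemma nFin {Γ : SimpleGraph V} {a : V} (hfine : Γ.FineAt a) (s : V) (L : ℕ) :
    {q | Γ.Adj a q ∧ ∃ ω : (Γ.deleteVertex a).Walk s q, ω.length ≤ L}.Finite := by
  rcases Set.eq_empty_or_nonempty
    {q | Γ.Adj a q ∧ ∃ ω : (Γ.deleteVertex a).Walk s q, ω.length ≤ L} with h | hne
  · rw [h]; exact Set.finite_empty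
  · obtain ⟨q₀, hq₀, ω₀, hω₀⟩ := hne
    refine Set.Finite.subset (hfine q₀ hq₀ (2 * L)) ?_
    rintro q ⟨hadj, ω, hω⟩
    refine ⟨hadj, ω₀.reverse.append ω, ?_⟩
    rw [SimpleGraph.Walk.length_append, SimpleGraph.Walk.length_reverse]
    omega

lemma chainFin {Γ : SimpleGraph V} {a : V} (hact : IsGraphAction G Γ)
    (hdisc : ∀ v : V, IsOpen ((stabilizer G v : Subgroup G) : Set G))
    (hedge : HasCompactEdgeStabilizers G Γ)
    (P : ∀ x y : V, Γ.Walk x y) {F : Set V} (hF : F.Finite) (hfine : Γ.FineAt a) :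
    ∀ (m : ℕ) (s : V),
      {q | Γ.Adj a q ∧ Chain (Γ.deleteVertex a) (JumpRel (G := G) Γ P F a) s m q}.Finite := by
  intro m
  induction m using Nat.strong_induction_on with
  | _ m ih =>
    intro s
    refine Set.Finite.subset (Set.Finite.union (nFin hfine s m)
      (Set.Finite.biUnion (Finset.range m).finite_toSet fun k hk =>
        Set.Finite.biUnion (ih k (by simpa using hk) s) fun w _ =>
          Set.Finite.biUnion (jumpFin hdisc hedge P hF a w) fun w' _ =>
            nFin hfine w' m)) ?_
    rintro q ⟨hadj, ch⟩
    rcases chain_decomp ch with ⟨ω, hω⟩ | ⟨k, w, w', hk, chk, hJ, ω, hlen⟩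
    · exact Or.inl ⟨hadj, ω, hω⟩
    · exact Or.inr (Set.mem_biUnion (by simpa using hk)
        (Set.mem_biUnion ⟨jumpRel_adj_left hact hJ, chk⟩
          (Set.mem_biUnion hJ ⟨hadj, ω, by omega⟩)))

lemma detour {Γ : SimpleGraph V} (hact : IsGraphAction G Γ) {a : V}
    (P : ∀ x y : V, Γ.Walk x y) {F : Set V} {M : ℕ}
    (hM : ∀ f₁ ∈ F, ∀ f₂ ∈ F, (P f₁ f₂).length ≤ M)
    {f₁ f₂ : V} (hf₁ : f₁ ∈ F) (hf₂ : f₂ ∈ F) (g : G)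
    (h₁ : g • f₁ ≠ a) (h₂ : g • f₂ ≠ a) :
    (∃ ω : (Γ.deleteVertex a).Walk (g • f₁) (g • f₂), ω.length ≤ M) ∨
    (∃ w₁ w₂ : V, (∃ ω₁ : (Γ.deleteVertex a).Walk (g • f₁) w₁, ω₁.length ≤ M) ∧
      JumpRel (G := G) Γ P F a w₁ w₂ ∧
      ∃ ω₂ : (Γ.deleteVertex a).Walk w₂ (g • f₂), ω₂.length ≤ M) := by
  classical
  have hQlen : (smulWalk hact g (P f₁ f₂)).length ≤ M := by
    rw [smulWalk_length]; exact hM f₁ hf₁ f₂ hf₂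
  set Q := smulWalk hact g (P f₁ f₂) with hQdef
  have hQsup : Q.support = (P f₁ f₂).support.map (fun x => g • x) := smulWalk_support hact g _
  by_cases hmem : a ∈ Q.support
  · right
    obtain ⟨w₁, ω₁, hadj₁, hns₁, hmem₁, hlen₁⟩ :=
      splitLast (Q.takeUntil a hmem) h₁ (Q.count_support_takeUntil_eq_one hmem)
    have hmem' : a ∈ Q.reverse.support := by
      rw [SimpleGraph.Walk.support_reverse, List.mem_reverse]; exact hmem
    obtain ⟨w₂, ω₂, hadj₂, hns₂, hmem₂, hlen₂⟩ :=
      splitLast (Q.reverse.takeUntil a hmem') h₂ (Q.reverse.count_support_takeUntil_eq_one hmem')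
    have hl₁ : ω₁.length ≤ M := by
      have h6 := SimpleGraph.Walk.length_takeUntil_le Q hmem; omega
    have hl₂ : ω₂.length ≤ M := by
      have h6 := SimpleGraph.Walk.length_takeUntil_le Q.reverse hmem'
      rw [SimpleGraph.Walk.length_reverse] at h6; omega
    have hw₁Q : w₁ ∈ Q.support := SimpleGraph.Walk.support_takeUntil_subset _ hmem hmem₁
    have hw₂Q : w₂ ∈ Q.support := by
      have h6 := SimpleGraph.Walk.support_takeUntil_subset _ hmem' hmem₂
      rw [SimpleGraph.Walk.support_reverse, List.mem_reverse] at h6; exact h6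
    obtain ⟨b, hbP, hbw⟩ : ∃ b ∈ (P f₁ f₂).support, g • b = w₁ := by
      rw [hQsup] at hw₁Q; simpa using hw₁Q
    obtain ⟨c0, hcP, hca⟩ : ∃ c0 ∈ (P f₁ f₂).support, g • c0 = a := by
      rw [hQsup] at hmem; simpa using hmem
    obtain ⟨e, heP, hew⟩ : ∃ e ∈ (P f₁ f₂).support, g • e = w₂ := by
      rw [hQsup] at hw₂Q; simpa using hw₂Q
    have hAdj1 : Γ.Adj b c0 := by
      have h5 := hact g⁻¹ _ _ hadj₁
      have e1 : g⁻¹ • w₁ = b := by rw [← hbw, inv_smul_smul]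
      have e2 : g⁻¹ • a = c0 := by rw [← hca, inv_smul_smul]
      rwa [e1, e2] at h5
    have hAdj2 : Γ.Adj (g⁻¹ • a) e := by
      have h5 := hact g⁻¹ _ _ hadj₂.symm
      have e2 : g⁻¹ • w₂ = e := by rw [← hew, inv_smul_smul]
      rwa [e2] at h5
    exact ⟨w₁, w₂, ⟨toDelete ω₁ hns₁, by rw [toDelete_length]; exact hl₁⟩,
      ⟨f₁, hf₁, f₂, hf₂, b, c0, g⁻¹ • a, e, hbP, hcP, heP, g,
        ⟨hbw, hca, hAdj1⟩, ⟨smul_inv_smul g a, hew, hAdj2⟩⟩,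
      ⟨toDelete ω₂.reverse
          (by rw [SimpleGraph.Walk.support_reverse, List.mem_reverse]; exact hns₂),
        by rw [toDelete_length, SimpleGraph.Walk.length_reverse]; exact hl₂⟩⟩
  · left
    exact ⟨toDelete Q hmem, by rw [toDelete_length]; exact hQlen⟩

lemma firstEdge {Γ : SimpleGraph V} {u : V} {H : Subgroup G} {A : V ⊕ (G ⧸ H)}
    {c : G ⧸ H} {Z : V ⊕ (G ⧸ H)}
    (W : ((attachConeEdges G Γ u H).deleteVertex A).Walk (Sum.inr c) Z)
    (hne : Sum.inr c ≠ Z) :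
    ∃ (p : V) (_ : ((attachConeEdges G Γ u H).deleteVertex A).Adj (Sum.inr c) (Sum.inl p))
      (W' : ((attachConeEdges G Γ u H).deleteVertex A).Walk (Sum.inl p) Z),
      W'.length + 1 = W.length := by
  cases W with
  | nil => exact absurd rfl hne
  | cons h W₂ =>
    rename_i b
    cases b with
    | inl p => exact ⟨p, h, W₂, by rw [SimpleGraph.Walk.length_cons]⟩
    | inr c₂ => exact absurd h.1 not_adj_inr_inr

lemma translate {Γ : SimpleGraph V} (hact : IsGraphAction G Γ) {u : V} {H : Subgroup G} {a : V}
    (P : ∀ x y : V, Γ.Walk x y) {F : Set V}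
    (hFdef : F = (fun g : G => g • u) '' (H : Set G))
    {M : ℕ} (hM : ∀ f₁ ∈ F, ∀ f₂ ∈ F, (P f₁ f₂).length ≤ M) :
    ∀ n : ℕ, ∀ {s q : V},
      ∀ W : ((attachConeEdges G Γ u H).deleteVertex (Sum.inl a)).Walk (Sum.inl s) (Sum.inl q),
      W.length ≤ n → s ≠ a →
      ∃ m, m ≤ (2 * M + 2) * n ∧
        Chain (Γ.deleteVertex a) (JumpRel (G := G) Γ P F a) s m q := by
  intro n
  induction n using Nat.strong_induction_on with
  | _ n ih =>
    intro s q W hW hs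
    cases W with
    | nil => exact ⟨0, Nat.zero_le _, Chain.refl 0⟩
    | cons h W₂ =>
      rename_i b
      rw [SimpleGraph.Walk.length_cons] at hW
      obtain ⟨hΔ, hne1, hne2⟩ := h
      cases b with
      | inl s' =>
        have hΓ : Γ.Adj s s' := adj_inl_inl hΔ
        have hs' : s' ≠ a := fun hh => hne2 (by rw [hh])
        obtain ⟨n', rfl⟩ : ∃ n', n = n' + 1 := ⟨n - 1, by omega⟩
        obtain ⟨m, hm, ch⟩ := ih n' (by omega) W₂ (by omega) hs'
        refine ⟨m + 1, ?_, chain_cons (Or.inl (show (Γ.deleteVertex a).Adj s s' from ⟨hΓ, hs, hs'⟩)) ch⟩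
        have hexp : (2 * M + 2) * (n' + 1) = (2 * M + 2) * n' + (2 * M + 2) := by ring
        omega
      | inr c =>
        obtain ⟨g, hs_eq, hc_eq⟩ := adj_inl_inr hΔ
        cases W₂ with
        | cons h₂ W₃ =>
          rename_i b₂
          rw [SimpleGraph.Walk.length_cons] at hW
          obtain ⟨hΔ₂, hne₃, hne₄⟩ := h₂
          cases b₂ with
          | inr c₂ => exact absurd hΔ₂ not_adj_inr_inr
          | inl s'' =>
            obtain ⟨g', hs''_eq, hc_eq'⟩ := adj_inr_inl hΔ₂
            have hs'' : s'' ≠ a := fun hh => hne₄ (by rw [hh])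
            have hmemH : g⁻¹ * g' ∈ H := QuotientGroup.eq.mp (hc_eq.symm.trans hc_eq')
            have hf₁ : u ∈ F := by rw [hFdef]; exact ⟨1, H.one_mem, one_smul G u⟩
            have hf₂ : (g⁻¹ * g') • u ∈ F := by rw [hFdef]; exact ⟨g⁻¹ * g', hmemH, rfl⟩
            have hgu : g • u = s := hs_eq.symm
            have hgf₂ : g • ((g⁻¹ * g') • u) = s'' := by
              rw [← mul_smul, mul_inv_cancel_left, hs''_eq]
            obtain ⟨n', rfl⟩ : ∃ n', n = n' + 2 := ⟨n - 2, by omega⟩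
            obtain ⟨m, hm, ch⟩ := ih n' (by omega) W₃ (by omega) hs''
            have hd := detour (G := G) hact P hM hf₁ hf₂ g
              (by rw [hgu]; exact hs) (by rw [hgf₂]; exact hs'')
            have hexp : (2 * M + 2) * (n' + 2) = (2 * M + 2) * n' + (4 * M + 4) := by ring
            rcases hd with ⟨ω, hω⟩ | ⟨w₁, w₂, ⟨ω₁, hω₁⟩, hJ, ⟨ω₂, hω₂⟩⟩
            · refine ⟨m + (ω.copy hgu hgf₂).length, ?_,
                chain_prepend_walk (ω.copy hgu hgf₂) ch⟩
              rw [SimpleGraph.Walk.length_copy]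
              omega
            · have ch2 := chain_prepend_walk (ω₂.copy rfl hgf₂) ch
              have ch3 := chain_cons (Or.inr hJ) ch2
              have ch4 := chain_prepend_walk (ω₁.copy hgu rfl) ch3
              refine ⟨_, ?_, ch4⟩
              rw [SimpleGraph.Walk.length_copy, SimpleGraph.Walk.length_copy]
              omega

lemma proj {Γ : SimpleGraph V} (hact : IsGraphAction G Γ) {u : V} {H : Subgroup G}
    (P : ∀ x y : V, Γ.Walk x y) {F : Set V}
    (hFdef : F = (fun g : G => g • u) '' (H : Set G))
    {M : ℕ} (hM : ∀ f₁ ∈ F, ∀ f₂ ∈ F, (P f₁ f₂).length ≤ M) :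
    ∀ n : ℕ, ∀ {x y : V}, ∀ W : (attachConeEdges G Γ u H).Walk (Sum.inl x) (Sum.inl y),
      W.length ≤ n → ∃ ω : Γ.Walk x y, ω.length ≤ (M + 2) * n := by
  intro n
  induction n using Nat.strong_induction_on with
  | _ n ih =>
    intro x y W hW
    cases W with
    | nil => exact ⟨SimpleGraph.Walk.nil, Nat.zero_le _⟩
    | cons h W₂ =>
      rename_i b
      rw [SimpleGraph.Walk.length_cons] at hW
      cases b with
      | inl x' =>
        obtain ⟨n', rfl⟩ : ∃ n', n = n' + 1 := ⟨n - 1, by omega⟩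
        obtain ⟨ω, hω⟩ := ih n' (by omega) W₂ (by omega)
        refine ⟨SimpleGraph.Walk.cons (adj_inl_inl h) ω, ?_⟩
        rw [SimpleGraph.Walk.length_cons]
        have hexp : (M + 2) * (n' + 1) = (M + 2) * n' + (M + 2) := by ring
        omega
      | inr c =>
        obtain ⟨g, hx_eq, hc_eq⟩ := adj_inl_inr h
        cases W₂ with
        | cons h₂ W₃ =>
          rename_i b₂
          rw [SimpleGraph.Walk.length_cons] at hW
          cases b₂ with
          | inr c₂ => exact absurd h₂ not_adj_inr_inr
          | inl x'' =>
            obtain ⟨g', hx''_eq, hc_eq'⟩ := adj_inr_inl h₂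
            have hmemH : g⁻¹ * g' ∈ H := QuotientGroup.eq.mp (hc_eq.symm.trans hc_eq')
            have hf₁ : u ∈ F := by rw [hFdef]; exact ⟨1, H.one_mem, one_smul G u⟩
            have hf₂ : (g⁻¹ * g') • u ∈ F := by rw [hFdef]; exact ⟨g⁻¹ * g', hmemH, rfl⟩
            have hgu : g • u = x := hx_eq.symm
            have hgf₂ : g • ((g⁻¹ * g') • u) = x'' := by
              rw [← mul_smul, mul_inv_cancel_left, hx''_eq]
            obtain ⟨n', rfl⟩ : ∃ n', n = n' + 2 := ⟨n - 2, by omega⟩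
            obtain ⟨ω, hω⟩ := ih n' (by omega) W₃ (by omega)
            refine ⟨((smulWalk hact g (P u ((g⁻¹ * g') • u))).copy hgu hgf₂).append ω, ?_⟩
            rw [SimpleGraph.Walk.length_append, SimpleGraph.Walk.length_copy, smulWalk_length]
            have h6 := hM u hf₁ _ hf₂
            have hexp : (M + 2) * (n' + 2) = (M + 2) * n' + (2 * M + 4) := by ring
            omega

end FineAux
/-- Attaching a `G`-orbit of cone edges `{g•u, gH}`, for `H` a compact open subgroup, to a
connected discrete `G`-graph with compact pointwise edge stabilizers preserves fineness at
every old vertex, and the inclusion is a quasi-isometry onto a 1-dense subset. -/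
theorem fineAt_attachConeEdges_iff
    {G : Type u} [Group G] [TopologicalSpace G] [IsTopologicalGroup G] [T2Space G]
    {V : Type v} [MulAction G V] (Γ : SimpleGraph V)
    (hact : IsGraphAction G Γ) (hconn : Γ.Connected)
    (hdisc : IsDiscreteAction G Γ)
    (hedge : HasCompactEdgeStabilizers G Γ)
    (u : V) (H : Subgroup G)
    (hHcompact : IsCompact (H : Set G)) (hHopen : IsOpen (H : Set G)) :
    (∀ a : V, Γ.FineAt a ↔ (attachConeEdges G Γ u H).FineAt (Sum.inl a)) ∧
    (∃ ℓ : ℕ, 1 ≤ ℓ ∧ ∀ x y : V,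
      (attachConeEdges G Γ u H).dist (Sum.inl x) (Sum.inl y) ≤ Γ.dist x y ∧
      Γ.dist x y ≤ ℓ * (attachConeEdges G Γ u H).dist (Sum.inl x) (Sum.inl y)) ∧
    (∀ z : V ⊕ (G ⧸ H), ∃ x : V, (attachConeEdges G Γ u H).dist z (Sum.inl x) ≤ 1) := by
  classical
  obtain ⟨P⟩ : Nonempty (∀ x y : V, Γ.Walk x y) :=
    ⟨fun x y => (hconn.preconnected x y).some⟩
  set F : Set V := (fun g : G => g • u) '' (H : Set G) with hFdef
  have hF : F.Finite := FineAux.finite_smul_image hdisc hHcompact u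
  obtain ⟨M, hM⟩ : ∃ M : ℕ, ∀ f₁ ∈ F, ∀ f₂ ∈ F, (P f₁ f₂).length ≤ M := by
    obtain ⟨M, hMub⟩ := Set.Finite.bddAbove
      ((hF.prod hF).image (fun pr : V × V => (P pr.1 pr.2).length))
    exact ⟨M, fun f₁ h₁ f₂ h₂ => hMub ⟨(f₁, f₂), ⟨h₁, h₂⟩, rfl⟩⟩
  have hfU : u ∈ F := by rw [hFdef]; exact ⟨1, H.one_mem, one_smul G u⟩
  -- the inclusion homomorphism of graphs
  have hinl : ∀ {p q : V}, Γ.Adj p q →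
      (attachConeEdges G Γ u H).Adj (Sum.inl p) (Sum.inl q) :=
    fun h => Or.inl ⟨_, _, h, rfl, rfl⟩
  -- backward direction of the fineness equivalence
  have hbackward : ∀ a : V, (attachConeEdges G Γ u H).FineAt (Sum.inl a) → Γ.FineAt a := by
    intro a hfine x hx n
    rw [SimpleGraph.mem_neighborSet] at hx
    have hhom : ∀ {p q : V}, (Γ.deleteVertex a).Adj p q →
        ((attachConeEdges G Γ u H).deleteVertex (Sum.inl a)).Adj (Sum.inl p) (Sum.inl q) :=
      fun h => ⟨hinl h.1, fun hh => h.2.1 (Sum.inl.inj hh), fun hh => h.2.2 (Sum.inl.inj hh)⟩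
    have key := hfine (Sum.inl x)
      (by rw [SimpleGraph.mem_neighborSet]; exact hinl hx) n
    refine Set.Finite.subset
      (Set.Finite.preimage (Sum.inl_injective.injOn) key) ?_
    rintro y ⟨hy, ω, hω⟩
    rw [SimpleGraph.mem_neighborSet] at hy
    refine ⟨by rw [SimpleGraph.mem_neighborSet]; exact hinl hy, ?_⟩
    exact ⟨ω.map ⟨Sum.inl, fun h => hhom h⟩, by rw [SimpleGraph.Walk.length_map]; exact hω⟩
  -- forward direction
  have hforward : ∀ a : V, Γ.FineAt a → (attachConeEdges G Γ u H).FineAt (Sum.inl a) := by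
    intro a hfine X hX n
    rw [SimpleGraph.mem_neighborSet] at hX
    -- finiteness of reachable old neighbours, from any old starting vertex
    have hA : ∀ (s : V) (n' : ℕ),
        {q : V | (attachConeEdges G Γ u H).Adj (Sum.inl a) (Sum.inl q) ∧
          ∃ W : ((attachConeEdges G Γ u H).deleteVertex (Sum.inl a)).Walk
            (Sum.inl s) (Sum.inl q), W.length ≤ n'}.Finite := by
      intro s n'
      by_cases hs : s = a
      · subst hs
        refine Set.Finite.subset (Set.finite_singleton s) ?_
        rintro q ⟨-, W, -⟩
        cases W with
        | nil => exact rfl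
        | cons h W₂ => exact absurd rfl h.2.1
      · refine Set.Finite.subset
          (FineAux.chainFin hact hdisc hedge P hF hfine ((2 * M + 2) * n') s) ?_
        rintro q ⟨hadj, W, hW⟩
        obtain ⟨m, hm, ch⟩ := FineAux.translate hact P hFdef hM n' W hW hs
        exact ⟨FineAux.adj_inl_inl hadj, FineAux.chain_mono hm ch⟩
    -- finiteness of reachable cone neighbours
    have hB : ∀ (s : V) (n' : ℕ),
        {cc : G ⧸ H | (attachConeEdges G Γ u H).Adj (Sum.inl a) (Sum.inr cc) ∧
          ∃ W : ((attachConeEdges G Γ u H).deleteVertex (Sum.inl a)).Walk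
            (Sum.inl s) (Sum.inr cc), W.length ≤ n'}.Finite := by
      intro s n'
      by_cases hs : s = a
      · subst hs
        refine Set.Finite.subset Set.finite_empty ?_
        rintro cc ⟨-, W, -⟩
        cases W with
        | cons h W₂ => exact absurd rfl h.2.1
      · refine Set.Finite.subset
          (Set.Finite.biUnion
            (FineAux.chainFin hact hdisc hedge P hF hfine ((2 * M + 2) * n' + M) s) fun w _ =>
           Set.Finite.biUnion hF fun f _ =>
           Set.Finite.biUnion (List.finite_toSet (P f u).support) fun b _ =>
           Set.Finite.biUnion (List.finite_toSet (P f u).support) fun c' _ =>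
             FineAux.finite_coset_image hHopen (FineAux.transSet_compact hedge b c' w a)) ?_
        rintro cc ⟨hadjc, W, hW⟩
        obtain ⟨g₀, ha_eq, hc₀⟩ := FineAux.adj_inl_inr hadjc
        obtain ⟨p, hadj_pc, W'r, hlenW'⟩ := FineAux.firstEdge W.reverse (by simp)
        rw [SimpleGraph.Walk.length_reverse] at hlenW'
        have hp_ne : p ≠ a := fun hh => hadj_pc.2.2 (by rw [hh])
        obtain ⟨g₂, hp_eq, hc₂⟩ := FineAux.adj_inr_inl hadj_pc.1
        have hmemH : g₀⁻¹ * g₂ ∈ H := QuotientGroup.eq.mp (hc₀.symm.trans hc₂)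
        have hfF : (g₀⁻¹ * g₂) • u ∈ F := by rw [hFdef]; exact ⟨g₀⁻¹ * g₂, hmemH, rfl⟩
        have hg₀f : g₀ • ((g₀⁻¹ * g₂) • u) = p := by
          rw [← mul_smul, mul_inv_cancel_left, hp_eq]
        obtain ⟨m, hm, ch⟩ := FineAux.translate hact P hFdef hM n' W'r.reverse
          (by rw [SimpleGraph.Walk.length_reverse]; omega) hs
        set Q : Γ.Walk p a :=
          ((FineAux.smulWalk hact g₀ (P ((g₀⁻¹ * g₂) • u) u)).copy hg₀f ha_eq.symm) with hQ
        have hQlen : Q.length ≤ M := by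
          rw [hQ, SimpleGraph.Walk.length_copy, FineAux.smulWalk_length]
          exact hM _ hfF _ hfU
        have hmemA : a ∈ Q.support := SimpleGraph.Walk.end_mem_support Q
        obtain ⟨w, ω, hadjw, hnsup, hwmem, hlen2⟩ :=
          FineAux.splitLast (Q.takeUntil a hmemA) hp_ne
            (Q.count_support_takeUntil_eq_one hmemA)
        have hωM : ω.length ≤ M := by
          have h3 := SimpleGraph.Walk.length_takeUntil_le Q hmemA
          omega
        have chw : FineAux.Chain (Γ.deleteVertex a) (FineAux.JumpRel (G := G) Γ P F a) s
            ((2 * M + 2) * n' + M) w := by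
          have c2 := FineAux.chain_append_walk (FineAux.toDelete ω hnsup) ch
          exact FineAux.chain_mono (by rw [FineAux.toDelete_length]; omega) c2
        have hQsup : Q.support = (P ((g₀⁻¹ * g₂) • u) u).support.map (fun x => g₀ • x) := by
          rw [hQ, SimpleGraph.Walk.support_copy, FineAux.smulWalk_support]
        have hwQ : w ∈ Q.support :=
          SimpleGraph.Walk.support_takeUntil_subset _ hmemA hwmem
        obtain ⟨b, hbP, hbw⟩ : ∃ b ∈ (P ((g₀⁻¹ * g₂) • u) u).support, g₀ • b = w := by
          rw [hQsup] at hwQ; simpa using hwQ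
        obtain ⟨c', hc'P, hc'a⟩ : ∃ c' ∈ (P ((g₀⁻¹ * g₂) • u) u).support, g₀ • c' = a := by
          have := hmemA; rw [hQsup] at this; simpa using this
        have hAdjbc : Γ.Adj b c' := by
          have h5 := hact g₀⁻¹ _ _ hadjw
          have e1 : g₀⁻¹ • w = b := by rw [← hbw, inv_smul_smul]
          have e2 : g₀⁻¹ • a = c' := by rw [← hc'a, inv_smul_smul]
          rwa [e1, e2] at h5
        exact Set.mem_biUnion ⟨hadjw.symm, chw⟩ (Set.mem_biUnion hfF (Set.mem_biUnion hbP
          (Set.mem_biUnion hc'P ⟨g₀, ⟨hbw, hc'a, hAdjbc⟩, hc₀.symm⟩)))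
    -- assemble, by cases on the base point
    rcases X with x₀ | c₀
    · refine Set.Finite.subset (((hA x₀ n).image Sum.inl).union ((hB x₀ n).image Sum.inr)) ?_
      rintro Y ⟨hYmem, W, hW⟩
      rw [SimpleGraph.mem_neighborSet] at hYmem
      cases Y with
      | inl q => exact Or.inl ⟨q, ⟨hYmem, W, hW⟩, rfl⟩
      | inr c => exact Or.inr ⟨c, ⟨hYmem, W, hW⟩, rfl⟩
    · obtain ⟨g₀₀, haeq, hc₀₀⟩ := FineAux.adj_inl_inr hX
      set F₀ : Set V := (fun g : G => g • u) '' ((fun x => g₀₀ * x) '' (H : Set G)) with hF₀def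
      have hF₀ : F₀.Finite := FineAux.finite_smul_image hdisc
        (hHcompact.image (continuous_mul_left g₀₀)) u
      refine Set.Finite.subset
        ((Set.finite_singleton (Sum.inr c₀ : V ⊕ (G ⧸ H))).union
          (Set.Finite.biUnion hF₀ fun p₀ _ =>
            ((hA p₀ n).image Sum.inl).union ((hB p₀ n).image Sum.inr))) ?_
      rintro Y ⟨hYmem, W, hW⟩
      rw [SimpleGraph.mem_neighborSet] at hYmem
      cases W with
      | nil => exact Or.inl rfl
      | cons h W₂ =>
        rename_i b
        rw [SimpleGraph.Walk.length_cons] at hW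
        cases b with
        | inr c₂ => exact absurd h.1 FineAux.not_adj_inr_inr
        | inl p₀ =>
          obtain ⟨g₁, hp₀eq, hc₁⟩ := FineAux.adj_inr_inl h.1
          have hmH : g₀₀⁻¹ * g₁ ∈ H := QuotientGroup.eq.mp (hc₀₀.symm.trans hc₁)
          have hp₀F : p₀ ∈ F₀ :=
            ⟨g₀₀ * (g₀₀⁻¹ * g₁), ⟨g₀₀⁻¹ * g₁, hmH, rfl⟩,
              by rw [mul_inv_cancel_left]; exact hp₀eq.symm⟩
          refine Or.inr (Set.mem_biUnion hp₀F ?_)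
          cases Y with
          | inl q => exact Or.inl ⟨q, ⟨hYmem, W₂, by omega⟩, rfl⟩
          | inr c => exact Or.inr ⟨c, ⟨hYmem, W₂, by omega⟩, rfl⟩
  refine ⟨fun a => ⟨hforward a, hbackward a⟩, ⟨M + 2, by omega, fun x y => ?_⟩, ?_⟩
  · constructor
    · obtain ⟨ω, hω⟩ := hconn.exists_walk_length_eq_dist x y
      have h5 := SimpleGraph.dist_le
        (ω.map (⟨Sum.inl, fun h => hinl h⟩ : Γ →g attachConeEdges G Γ u H))
      rwa [SimpleGraph.Walk.length_map, hω] at h5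
    · have hreach : (attachConeEdges G Γ u H).Reachable (Sum.inl x) (Sum.inl y) :=
        ⟨((hconn.preconnected x y).some).map (⟨Sum.inl, fun h => hinl h⟩ :
            Γ →g attachConeEdges G Γ u H)⟩
      obtain ⟨W, hW⟩ := hreach.exists_walk_length_eq_dist
      obtain ⟨ω, hω⟩ := FineAux.proj hact P hFdef hM W.length W le_rfl
      calc Γ.dist x y ≤ ω.length := SimpleGraph.dist_le ω
        _ ≤ (M + 2) * W.length := hω
        _ = (M + 2) * (attachConeEdges G Γ u H).dist (Sum.inl x) (Sum.inl y) := by rw [hW]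
  · rintro (xv | c)
    · exact ⟨xv, by simp [SimpleGraph.dist_self]⟩
    · obtain ⟨g, rfl⟩ := QuotientGroup.mk_surjective c
      refine ⟨g • u, ?_⟩
      have hadj : (attachConeEdges G Γ u H).Adj (Sum.inr ((g : G ⧸ H))) (Sum.inl (g • u)) :=
        Or.inr ⟨g, Or.inr ⟨rfl, rfl⟩⟩
      have h5 := SimpleGraph.dist_le (SimpleGraph.Walk.cons hadj SimpleGraph.Walk.nil)
      simpa using h5
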